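/- Let F : F_{2^n} → F_{2^n} be any function with Walsh transform W_F. Then Σ_{b ∈ F_{2^n}^*} Σ_{v_1, v_2 ∈ F_{2^n}} W_F(b v_1, v_1)·W_F(b v_2, v_2)·W_F(b(v_1+v_2), v_1+v_2) + 2^{n+2}·Σ_{v ∈ F_{2^n}^*} W_F(0,v)^2 − 2^{4n+2} + 2^{3n+2} ≥ 0, and equality holds if and only if F is an o-polynomial. -/

import Mathlib

open scoped Classical
open Finset

noncomputable instance (n : ℕ) : Fintype (GaloisField 2 n) := Fintype.ofFinite _

/-- The absolute trace from `GF(2^n)` to `GF(2)`. -/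
noncomputable def tr (n : ℕ) (x : GaloisField 2 n) : ZMod 2 :=
  Algebra.trace (ZMod 2) (GaloisField 2 n) x

/-- The Walsh transform of `F` at `(u, v)`. -/
noncomputable def W (n : ℕ) (F : GaloisField 2 n → GaloisField 2 n)
    (u v : GaloisField 2 n) : ℤ :=
  ∑ x : GaloisField 2 n, (-1 : ℤ) ^ (tr n (v * F x) + tr n (u * x)).val

/-- `F` is an o-polynomial: for every nonzero `b` and every `a`, the equation
`F x + b * x = a` has 0 or 2 solutions. -/
def IsOPoly (n : ℕ) (F : GaloisField 2 n → GaloisField 2 n) : Prop :=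
  ∀ b : GaloisField 2 n, b ≠ 0 → ∀ a : GaloisField 2 n,
    Nat.card {x : GaloisField 2 n // F x + b * x = a} = 0 ∨
    Nat.card {x : GaloisField 2 n // F x + b * x = a} = 2

namespace OPA
variable {n : ℕ}

noncomputable def chi (n : ℕ) (t : GaloisField 2 n) : ℤ := (-1) ^ (tr n t).val

lemma chi_add (s t : GaloisField 2 n) : chi n (s + t) = chi n s * chi n t := by
  simp only [chi, tr, map_add, ZMod.val_add]
  rw [← neg_one_pow_eq_pow_mod_two, pow_add]

lemma chi_zero : chi n 0 = 1 := by simp [chi, tr]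

lemma card_K (hn : 0 < n) : (Fintype.card (GaloisField 2 n) : ℤ) = 2 ^ n := by
  rw [← Nat.card_eq_fintype_card, GaloisField.card 2 n hn.ne']; push_cast; ring

lemma sum_chi (hn : 0 < n) (c : GaloisField 2 n) :
    ∑ v : GaloisField 2 n, chi n (v * c) = if c = 0 then (2 ^ n : ℤ) else 0 := by
  split_ifs with hc
  · subst hc
    simp only [mul_zero, chi_zero]
    rw [Finset.sum_const, card_univ, nsmul_eq_mul, mul_one, card_K hn]
  · obtain ⟨y, hy⟩ := Algebra.trace_surjective (ZMod 2) (GaloisField 2 n) 1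
    set v₀ := y * c⁻¹ with hv₀
    have hcv₀ : chi n (v₀ * c) = -1 := by
      have : v₀ * c = y := by rw [hv₀, mul_assoc, inv_mul_cancel₀ hc, mul_one]
      rw [this]; simp [chi, tr, hy, ZMod.val_one]
    have key : ∑ v : GaloisField 2 n, chi n (v * c)
        = -∑ v : GaloisField 2 n, chi n (v * c) := by
      nth_rewrite 1 [← Equiv.sum_comp (Equiv.addRight v₀) (fun v => chi n (v * c))]
      simp only [Equiv.coe_addRight, add_mul, chi_add, hcv₀]
      rw [← Finset.sum_neg_distrib]
      exact Finset.sum_congr rfl fun v _ => by ring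
    linarith

lemma add_eq_zero_iff' (x y : GaloisField 2 n) : x + y = 0 ↔ x = y := by
  rw [← CharTwo.sub_eq_add, sub_eq_zero]

lemma W_eq (F : GaloisField 2 n → GaloisField 2 n) (u v : GaloisField 2 n) :
    W n F u v = ∑ x, chi n (v * F x + u * x) := by
  unfold W chi tr
  exact Finset.sum_congr rfl fun x _ => by rw [map_add]

noncomputable def Nn (n : ℕ) (F : GaloisField 2 n → GaloisField 2 n)
    (b a : GaloisField 2 n) : ℕ :=
  (univ.filter fun x => F x + b * x = a).card

lemma sum_comp_fiber {M : Type*} [AddCommMonoid M]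
    (g : GaloisField 2 n → GaloisField 2 n) (h : GaloisField 2 n → M) :
    ∑ x, h (g x) = ∑ a, ((univ.filter fun x => g x = a).card) • h a := by
  rw [← Finset.sum_fiberwise' univ g h]
  exact Finset.sum_congr rfl fun a _ => by rw [Finset.sum_const]

lemma sum_comp_fiber' (F : GaloisField 2 n → GaloisField 2 n)
    (b : GaloisField 2 n) (h : GaloisField 2 n → ℤ) :
    ∑ x, h (F x + b * x) = ∑ a, (Nn n F b a : ℤ) * h a := by
  rw [sum_comp_fiber (fun x => F x + b * x) h]
  exact Finset.sum_congr rfl fun a _ => by rw [nsmul_eq_mul]; rfl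

lemma sum_Nn (hn : 0 < n) (F : GaloisField 2 n → GaloisField 2 n)
    (b : GaloisField 2 n) : ∑ a, (Nn n F b a : ℤ) = 2 ^ n := by
  have := sum_comp_fiber' F b (fun _ => (1 : ℤ))
  simpa [card_K hn] using this.symm

lemma Nn_as_sum (F : GaloisField 2 n → GaloisField 2 n) (b a : GaloisField 2 n) :
    (Nn n F b a : ℤ) = ∑ y, if F y + b * y = a then (1 : ℤ) else 0 := by
  rw [Nn, Finset.card_filter]
  push_cast
  rfl

/-- the inner character sum `U`. -/
lemma U_eq (hn : 0 < n) (F : GaloisField 2 n → GaloisField 2 n)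
    (b w : GaloisField 2 n) :
    ∑ v, (∑ x, chi n (v * (F x + b * x))) * chi n (v * w)
      = 2 ^ n * (Nn n F b w : ℤ) := by
  calc ∑ v, (∑ x, chi n (v * (F x + b * x))) * chi n (v * w)
      = ∑ v, ∑ x, chi n (v * ((F x + b * x) + w)) := by
        refine Finset.sum_congr rfl fun v _ => ?_
        rw [Finset.sum_mul]
        exact Finset.sum_congr rfl fun x _ => by
          rw [mul_add v (F x + b * x) w, chi_add]
    _ = ∑ x, ∑ v, chi n (v * ((F x + b * x) + w)) := Finset.sum_comm
    _ = ∑ x, if (F x + b * x) + w = 0 then (2 ^ n : ℤ) else 0 :=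
        Finset.sum_congr rfl fun x _ => sum_chi hn _
    _ = ∑ x, if F x + b * x = w then (2 ^ n : ℤ) else 0 := by
        simp_rw [add_eq_zero_iff']
    _ = 2 ^ n * (Nn n F b w : ℤ) := by
        rw [Nn_as_sum, Finset.mul_sum]
        exact Finset.sum_congr rfl fun x _ => by split_ifs <;> ring

lemma T_eq (hn : 0 < n) (F : GaloisField 2 n → GaloisField 2 n)
    (b : GaloisField 2 n) :
    ∑ v₁ : GaloisField 2 n, ∑ v₂ : GaloisField 2 n,
        W n F (b * v₁) v₁ * W n F (b * v₂) v₂ * W n F (b * (v₁ + v₂)) (v₁ + v₂)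
      = (2 ^ n : ℤ) * 2 ^ n * ∑ a, (Nn n F b a : ℤ) ^ 3 := by
  have hW : ∀ v, W n F (b * v) v = ∑ x, chi n (v * (F x + b * x)) := fun v => by
    rw [W_eq]
    exact Finset.sum_congr rfl fun x _ => by congr 1; ring
  set S : GaloisField 2 n → ℤ := fun v => ∑ x, chi n (v * (F x + b * x)) with hS
  have step1 : ∑ v₁ : GaloisField 2 n, ∑ v₂ : GaloisField 2 n,
        W n F (b * v₁) v₁ * W n F (b * v₂) v₂ * W n F (b * (v₁ + v₂)) (v₁ + v₂)
      = ∑ v₁, ∑ v₂, ∑ z, S v₁ * S v₂ *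
          (chi n (v₁ * (F z + b * z)) * chi n (v₂ * (F z + b * z))) := by
    refine Finset.sum_congr rfl fun v₁ _ => Finset.sum_congr rfl fun v₂ _ => ?_
    simp only [hS]
    rw [hW v₁, hW v₂, hW (v₁ + v₂), Finset.mul_sum]
    refine Finset.sum_congr rfl fun z _ => ?_
    rw [add_mul v₁ v₂ (F z + b * z), chi_add]
  rw [step1]
  have step2 : ∑ v₁, ∑ v₂, ∑ z, S v₁ * S v₂ *
          (chi n (v₁ * (F z + b * z)) * chi n (v₂ * (F z + b * z)))
      = ∑ z, ∑ v₁, ∑ v₂, S v₁ * S v₂ *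
          (chi n (v₁ * (F z + b * z)) * chi n (v₂ * (F z + b * z))) := by
    calc ∑ v₁, ∑ v₂, ∑ z, S v₁ * S v₂ *
          (chi n (v₁ * (F z + b * z)) * chi n (v₂ * (F z + b * z)))
        = ∑ v₁, ∑ z, ∑ v₂, S v₁ * S v₂ *
          (chi n (v₁ * (F z + b * z)) * chi n (v₂ * (F z + b * z))) :=
          Finset.sum_congr rfl fun v₁ _ => Finset.sum_comm
      _ = ∑ z, ∑ v₁, ∑ v₂, S v₁ * S v₂ *
          (chi n (v₁ * (F z + b * z)) * chi n (v₂ * (F z + b * z))) :=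
          Finset.sum_comm
  rw [step2]
  have step3 : ∀ z : GaloisField 2 n, ∑ v₁, ∑ v₂, S v₁ * S v₂ *
          (chi n (v₁ * (F z + b * z)) * chi n (v₂ * (F z + b * z)))
      = (2 ^ n * (Nn n F b (F z + b * z) : ℤ)) *
        (2 ^ n * (Nn n F b (F z + b * z) : ℤ)) := by
    intro z
    rw [← U_eq hn F b (F z + b * z), Finset.sum_mul_sum]
    refine Finset.sum_congr rfl fun v₁ _ => Finset.sum_congr rfl fun v₂ _ => ?_
    simp only [hS]
    ring
  calc ∑ z, ∑ v₁, ∑ v₂, S v₁ * S v₂ *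
          (chi n (v₁ * (F z + b * z)) * chi n (v₂ * (F z + b * z)))
      = ∑ z, (2 ^ n : ℤ) * 2 ^ n * ((Nn n F b (F z + b * z) : ℤ) ^ 2) := by
        refine Finset.sum_congr rfl fun z _ => ?_
        rw [step3 z]; ring
    _ = (2 ^ n : ℤ) * 2 ^ n * ∑ z, ((Nn n F b (F z + b * z) : ℤ) ^ 2) := by
        rw [Finset.mul_sum]
    _ = (2 ^ n : ℤ) * 2 ^ n * ∑ a, (Nn n F b a : ℤ) ^ 3 := by
        rw [sum_comp_fiber' F b (fun a => (Nn n F b a : ℤ) ^ 2)]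
        congr 1
        exact Finset.sum_congr rfl fun a _ => by ring


lemma W_zero_left (F : GaloisField 2 n → GaloisField 2 n) (v : GaloisField 2 n) :
    W n F 0 v = ∑ x, chi n (v * F x) := by
  rw [W_eq]
  exact Finset.sum_congr rfl fun x _ => by rw [zero_mul, add_zero]

lemma Nn_zero (F : GaloisField 2 n → GaloisField 2 n) (a : GaloisField 2 n) :
    Nn n F 0 a = (univ.filter fun x => F x = a).card := by
  unfold Nn
  congr 1
  ext x
  simp

lemma sq_sum_all (hn : 0 < n) (F : GaloisField 2 n → GaloisField 2 n) :
    ∑ v : GaloisField 2 n, W n F 0 v ^ 2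
      = 2 ^ n * ∑ a, (Nn n F 0 a : ℤ) ^ 2 := by
  calc ∑ v : GaloisField 2 n, W n F 0 v ^ 2
      = ∑ v : GaloisField 2 n, ∑ x, ∑ y, chi n (v * F x) * chi n (v * F y) := by
        refine Finset.sum_congr rfl fun v _ => ?_
        rw [W_zero_left, sq, Finset.sum_mul_sum]
    _ = ∑ v : GaloisField 2 n, ∑ x, ∑ y, chi n (v * (F x + F y)) := by
        refine Finset.sum_congr rfl fun v _ => Finset.sum_congr rfl fun x _ =>
          Finset.sum_congr rfl fun y _ => ?_
        rw [mul_add v (F x) (F y), chi_add]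
    _ = ∑ x, ∑ y, ∑ v : GaloisField 2 n, chi n (v * (F x + F y)) := by
        calc ∑ v : GaloisField 2 n, ∑ x, ∑ y, chi n (v * (F x + F y))
            = ∑ x, ∑ v : GaloisField 2 n, ∑ y, chi n (v * (F x + F y)) :=
              Finset.sum_comm
          _ = ∑ x, ∑ y, ∑ v : GaloisField 2 n, chi n (v * (F x + F y)) :=
              Finset.sum_congr rfl fun x _ => Finset.sum_comm
    _ = ∑ x, ∑ y, if F x + F y = 0 then (2 ^ n : ℤ) else 0 :=
        Finset.sum_congr rfl fun x _ => Finset.sum_congr rfl fun y _ => sum_chi hn _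
    _ = ∑ x, ∑ y, if F y = F x then (2 ^ n : ℤ) else 0 := by
        refine Finset.sum_congr rfl fun x _ => Finset.sum_congr rfl fun y _ => ?_
        rw [add_eq_zero_iff']
        exact if_congr eq_comm rfl rfl
    _ = ∑ x, (2 ^ n : ℤ) * (Nn n F 0 (F x) : ℤ) := by
        refine Finset.sum_congr rfl fun x _ => ?_
        rw [Nn_zero, Finset.card_filter]
        push_cast
        rw [Finset.mul_sum]
        exact Finset.sum_congr rfl fun y _ => by split_ifs <;> ring
    _ = 2 ^ n * ∑ a, (Nn n F 0 a : ℤ) ^ 2 := by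
        rw [← Finset.mul_sum]
        congr 1
        have := sum_comp_fiber' F 0 (fun a => (Nn n F 0 a : ℤ))
        simp only [zero_mul, add_zero] at this
        rw [this]
        exact Finset.sum_congr rfl fun a _ => by ring

lemma W_zero_zero (hn : 0 < n) (F : GaloisField 2 n → GaloisField 2 n) :
    W n F 0 0 = 2 ^ n := by
  rw [W_zero_left]
  simp only [zero_mul, chi_zero]
  rw [Finset.sum_const, card_univ, nsmul_eq_mul, mul_one, card_K hn]

lemma sq_sum_ne (hn : 0 < n) (F : GaloisField 2 n → GaloisField 2 n) :
    ∑ v ∈ univ.filter (fun v : GaloisField 2 n => v ≠ 0), W n F 0 v ^ 2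
      = 2 ^ n * ∑ a, (Nn n F 0 a : ℤ) ^ 2 - 2 ^ n * 2 ^ n := by
  have h : ∑ v : GaloisField 2 n, W n F 0 v ^ 2
      = W n F 0 0 ^ 2 + ∑ v ∈ univ.filter (fun v : GaloisField 2 n => v ≠ 0),
          W n F 0 v ^ 2 := by
    rw [Finset.filter_ne']
    exact (Finset.add_sum_erase univ (fun v => W n F 0 v ^ 2)
      (Finset.mem_univ 0)).symm
  rw [sq_sum_all hn F, W_zero_zero hn F] at h
  nlinarith [h]

lemma count_sq (hn : 0 < n) (F : GaloisField 2 n → GaloisField 2 n) :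
    ∑ b : GaloisField 2 n, ∑ a, (Nn n F b a : ℤ) ^ 2
      = 2 * (2 ^ n * 2 ^ n) - 2 ^ n := by
  have per_b : ∀ b, ∑ a, (Nn n F b a : ℤ) ^ 2
      = ∑ x, ∑ y, (if F y + b * y = F x + b * x then (1 : ℤ) else 0) := by
    intro b
    have h1 : ∑ x, (Nn n F b (F x + b * x) : ℤ) = ∑ a, (Nn n F b a : ℤ) ^ 2 := by
      rw [sum_comp_fiber' F b (fun a => (Nn n F b a : ℤ))]
      exact Finset.sum_congr rfl fun a _ => by ring
    rw [← h1]
    exact Finset.sum_congr rfl fun x _ => Nn_as_sum F b (F x + b * x)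
  have inner : ∀ x y : GaloisField 2 n,
      ∑ b : GaloisField 2 n, (if F y + b * y = F x + b * x then (1 : ℤ) else 0)
        = if x = y then (2 ^ n : ℤ) else 1 := by
    intro x y
    by_cases hxy : x = y
    · subst hxy
      simp only [if_true, if_pos rfl]
      rw [Finset.sum_const, card_univ, nsmul_eq_mul, mul_one, card_K hn]
    · rw [if_neg hxy]
      have hne : x + y ≠ 0 := fun h => hxy ((add_eq_zero_iff' x y).mp h)
      have key : ∀ b : GaloisField 2 n,
          (F y + b * y = F x + b * x) ↔ b = (F x + F y) * (x + y)⁻¹ := by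
        intro b
        rw [← add_eq_zero_iff' (F y + b * y) (F x + b * x)]
        constructor
        · intro h
          have h2 : b * (x + y) = F x + F y := by
            have : (F x + F y) + b * (x + y) = 0 := by
              rw [← h]; ring
            exact ((add_eq_zero_iff' _ _).mp this).symm
          field_simp [hne] at h2 ⊢
          linear_combination h2
        · intro h
          subst h
          have hb : (F x + F y) * (x + y)⁻¹ * (x + y) = F x + F y := by
            field_simp
          have : (F x + F y) + (F x + F y) * (x + y)⁻¹ * (x + y) = 0 := by
            rw [hb]
            rw [add_eq_zero_iff']
          linear_combination this - hb + hb
      calc ∑ b : GaloisField 2 n, (if F y + b * y = F x + b * x then (1 : ℤ) else 0)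
          = ∑ b : GaloisField 2 n,
              (if b = (F x + F y) * (x + y)⁻¹ then (1 : ℤ) else 0) := by
            exact Finset.sum_congr rfl fun b _ => if_congr (key b) rfl rfl
        _ = 1 := by
            rw [Finset.sum_ite_eq' univ ((F x + F y) * (x + y)⁻¹) (fun _ => (1:ℤ))]
            simp
  calc ∑ b : GaloisField 2 n, ∑ a, (Nn n F b a : ℤ) ^ 2
      = ∑ b : GaloisField 2 n, ∑ x, ∑ y,
          (if F y + b * y = F x + b * x then (1 : ℤ) else 0) :=
        Finset.sum_congr rfl fun b _ => per_b b
    _ = ∑ x, ∑ y, ∑ b : GaloisField 2 n,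
          (if F y + b * y = F x + b * x then (1 : ℤ) else 0) := by
        calc ∑ b : GaloisField 2 n, ∑ x, ∑ y,
              (if F y + b * y = F x + b * x then (1 : ℤ) else 0)
            = ∑ x, ∑ b : GaloisField 2 n, ∑ y,
              (if F y + b * y = F x + b * x then (1 : ℤ) else 0) := Finset.sum_comm
          _ = ∑ x, ∑ y, ∑ b : GaloisField 2 n,
              (if F y + b * y = F x + b * x then (1 : ℤ) else 0) :=
              Finset.sum_congr rfl fun x _ => Finset.sum_comm
    _ = ∑ x : GaloisField 2 n, ∑ y : GaloisField 2 n,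
          (if x = y then (2 ^ n : ℤ) else 1) :=
        Finset.sum_congr rfl fun x _ => Finset.sum_congr rfl fun y _ => by
          rw [inner x y]
    _ = 2 * (2 ^ n * 2 ^ n) - 2 ^ n := by
        have hx : ∀ x : GaloisField 2 n,
            ∑ y : GaloisField 2 n, (if x = y then (2 ^ n : ℤ) else 1)
              = (2 ^ n : ℤ) + (2 ^ n - 1) := by
          intro x
          have : ∀ y : GaloisField 2 n, (if x = y then (2 ^ n : ℤ) else 1)
              = 1 + (if x = y then (2 ^ n : ℤ) - 1 else 0) := by
            intro y; split_ifs <;> ring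
          simp_rw [this]
          rw [Finset.sum_add_distrib, Finset.sum_const, card_univ, nsmul_eq_mul,
            mul_one, card_K hn, Finset.sum_ite_eq univ x (fun _ => (2^n : ℤ) - 1)]
          simp
        simp_rw [hx]
        rw [Finset.sum_const, card_univ, nsmul_eq_mul, card_K hn]
        ring


lemma cub_nonneg (m : ℕ) : 0 ≤ (m : ℤ) ^ 3 - 3 * m ^ 2 + 2 * m := by
  rcases le_or_gt m 2 with h | h
  · interval_cases m <;> norm_num
  · have h2 : (2 : ℤ) < m := by exact_mod_cast h
    nlinarith

lemma cub_eq_zero_iff (m : ℕ) : (m : ℤ) ^ 3 - 3 * m ^ 2 + 2 * m = 0 ↔ m ≤ 2 := by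
  constructor
  · intro h
    by_contra hm
    push_neg at hm
    have h2 : (2 : ℤ) < m := by exact_mod_cast hm
    nlinarith
  · intro h
    interval_cases m <;> norm_num

lemma quad_nonneg (m : ℕ) : 0 ≤ (m : ℤ) ^ 2 - m := by
  have : m ≤ m ^ 2 := Nat.le_self_pow two_ne_zero m
  have h2 : (m : ℤ) ≤ (m : ℤ) ^ 2 := by exact_mod_cast this
  linarith

lemma quad_eq_zero_iff (m : ℕ) : (m : ℤ) ^ 2 - m = 0 ↔ m ≤ 1 := by
  constructor
  · intro h
    by_contra hm
    push_neg at hm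
    have h2 : (1 : ℤ) < m := by exact_mod_cast hm
    nlinarith
  · intro h
    interval_cases m <;> norm_num

lemma two_sub_nonneg (m : ℕ) (h : m ≤ 2) : 0 ≤ 2 * (m : ℤ) - m ^ 2 := by
  interval_cases m <;> norm_num

lemma two_sub_eq_zero_iff (m : ℕ) : 2 * (m : ℤ) - m ^ 2 = 0 ↔ m = 0 ∨ m = 2 := by
  constructor
  · intro h
    have h2 : (m : ℤ) * (2 - m) = 0 := by linarith [h]; 
    rcases mul_eq_zero.mp h2 with h3 | h3
    · left; exact_mod_cast h3
    · right
      have : (m : ℤ) = 2 := by linarith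
      exact_mod_cast this
  · rintro (rfl | rfl) <;> norm_num

lemma natCard_eq (F : GaloisField 2 n → GaloisField 2 n) (b a : GaloisField 2 n) :
    Nat.card {x : GaloisField 2 n // F x + b * x = a} = Nn n F b a := by
  rw [Nat.card_eq_fintype_card, Fintype.card_subtype]
  rfl

end OPA

theorem o_polynomial_walsh_characterization (n : ℕ) (hn : 0 < n)
    (F : GaloisField 2 n → GaloisField 2 n) :
    (∑ b ∈ univ.filter (fun b : GaloisField 2 n => b ≠ 0),
        ∑ v₁ : GaloisField 2 n, ∑ v₂ : GaloisField 2 n,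
          W n F (b * v₁) v₁ * W n F (b * v₂) v₂ * W n F (b * (v₁ + v₂)) (v₁ + v₂)
      + 2 ^ (n + 2) *
          ∑ v ∈ univ.filter (fun v : GaloisField 2 n => v ≠ 0), W n F 0 v ^ 2
      - 2 ^ (4 * n + 2) + 2 ^ (3 * n + 2) ≥ 0) ∧
    (∑ b ∈ univ.filter (fun b : GaloisField 2 n => b ≠ 0),
        ∑ v₁ : GaloisField 2 n, ∑ v₂ : GaloisField 2 n,
          W n F (b * v₁) v₁ * W n F (b * v₂) v₂ * W n F (b * (v₁ + v₂)) (v₁ + v₂)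
      + 2 ^ (n + 2) *
          ∑ v ∈ univ.filter (fun v : GaloisField 2 n => v ≠ 0), W n F 0 v ^ 2
      - 2 ^ (4 * n + 2) + 2 ^ (3 * n + 2) = 0 ↔ IsOPoly n F) := by
  classical
  -- A : the triple Walsh sum
  have hA : (∑ b ∈ univ.filter (fun b : GaloisField 2 n => b ≠ 0),
        ∑ v₁ : GaloisField 2 n, ∑ v₂ : GaloisField 2 n,
          W n F (b * v₁) v₁ * W n F (b * v₂) v₂ * W n F (b * (v₁ + v₂)) (v₁ + v₂))
      = (2 ^ n : ℤ) * 2 ^ n * ∑ b ∈ univ.filter (fun b : GaloisField 2 n => b ≠ 0),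
          ∑ a : GaloisField 2 n, (OPA.Nn n F b a : ℤ) ^ 3 := by
    rw [Finset.mul_sum]
    exact Finset.sum_congr rfl fun b _ => OPA.T_eq hn F b
  have hB := OPA.sq_sum_ne hn F
  have hC := OPA.count_sq hn F
  have hYsplit : (∑ b : GaloisField 2 n, ∑ a : GaloisField 2 n, (OPA.Nn n F b a : ℤ) ^ 2)
      = (∑ a : GaloisField 2 n, (OPA.Nn n F 0 a : ℤ) ^ 2)
        + ∑ b ∈ univ.filter (fun b : GaloisField 2 n => b ≠ 0),
            ∑ a : GaloisField 2 n, (OPA.Nn n F b a : ℤ) ^ 2 := by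
    rw [Finset.filter_ne']
    exact (Finset.add_sum_erase univ
      (fun b => ∑ a : GaloisField 2 n, (OPA.Nn n F b a : ℤ) ^ 2)
      (Finset.mem_univ 0)).symm
  have hY' : (∑ b ∈ univ.filter (fun b : GaloisField 2 n => b ≠ 0),
        ∑ a : GaloisField 2 n, (OPA.Nn n F b a : ℤ) ^ 2)
      + (∑ a : GaloisField 2 n, (OPA.Nn n F 0 a : ℤ) ^ 2)
      = 2 * ((2 ^ n : ℤ) * 2 ^ n) - 2 ^ n := by
    rw [hYsplit] at hC
    linarith
  have hZval : (∑ b ∈ univ.filter (fun b : GaloisField 2 n => b ≠ 0),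
        ∑ a : GaloisField 2 n, (OPA.Nn n F b a : ℤ))
      = (2 ^ n : ℤ) * 2 ^ n - 2 ^ n := by
    rw [Finset.sum_congr rfl (fun b _ => OPA.sum_Nn hn F b), Finset.sum_const,
      Finset.filter_ne', Finset.card_erase_of_mem (Finset.mem_univ 0),
      Finset.card_univ, nsmul_eq_mul]
    have hcard : Fintype.card (GaloisField 2 n) = 2 ^ n := by
      rw [← Nat.card_eq_fintype_card]; exact GaloisField.card 2 n hn.ne'
    rw [hcard, Nat.cast_sub Nat.one_le_two_pow]
    push_cast
    ring
  have hP1 : (∑ a : GaloisField 2 n, (OPA.Nn n F 0 a : ℤ)) = 2 ^ n :=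
    OPA.sum_Nn hn F 0
  have hd1 : (∑ b ∈ univ.filter (fun b : GaloisField 2 n => b ≠ 0),
        ∑ a : GaloisField 2 n,
          ((OPA.Nn n F b a : ℤ) ^ 3 - 3 * (OPA.Nn n F b a : ℤ) ^ 2
            + 2 * (OPA.Nn n F b a : ℤ)))
      = (∑ b ∈ univ.filter (fun b : GaloisField 2 n => b ≠ 0),
          ∑ a : GaloisField 2 n, (OPA.Nn n F b a : ℤ) ^ 3)
        - 3 * (∑ b ∈ univ.filter (fun b : GaloisField 2 n => b ≠ 0),
            ∑ a : GaloisField 2 n, (OPA.Nn n F b a : ℤ) ^ 2)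
        + 2 * (∑ b ∈ univ.filter (fun b : GaloisField 2 n => b ≠ 0),
            ∑ a : GaloisField 2 n, (OPA.Nn n F b a : ℤ)) := by
    simp only [Finset.sum_add_distrib, Finset.sum_sub_distrib, ← Finset.mul_sum]
  have hd2 : (∑ a : GaloisField 2 n,
        ((OPA.Nn n F 0 a : ℤ) ^ 2 - (OPA.Nn n F 0 a : ℤ)))
      = (∑ a : GaloisField 2 n, (OPA.Nn n F 0 a : ℤ) ^ 2)
        - ∑ a : GaloisField 2 n, (OPA.Nn n F 0 a : ℤ) :=
    Finset.sum_sub_distrib _ _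
  have hGD : (∑ b ∈ univ.filter (fun b : GaloisField 2 n => b ≠ 0),
        ∑ a : GaloisField 2 n,
          (2 * (OPA.Nn n F b a : ℤ) - (OPA.Nn n F b a : ℤ) ^ 2))
      = ∑ a : GaloisField 2 n,
          ((OPA.Nn n F 0 a : ℤ) ^ 2 - (OPA.Nn n F 0 a : ℤ)) := by
    have e : (∑ b ∈ univ.filter (fun b : GaloisField 2 n => b ≠ 0),
          ∑ a : GaloisField 2 n,
            (2 * (OPA.Nn n F b a : ℤ) - (OPA.Nn n F b a : ℤ) ^ 2))
        = 2 * (∑ b ∈ univ.filter (fun b : GaloisField 2 n => b ≠ 0),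
              ∑ a : GaloisField 2 n, (OPA.Nn n F b a : ℤ))
          - ∑ b ∈ univ.filter (fun b : GaloisField 2 n => b ≠ 0),
              ∑ a : GaloisField 2 n, (OPA.Nn n F b a : ℤ) ^ 2 := by
      simp only [Finset.sum_sub_distrib, ← Finset.mul_sum]
    rw [e, hd2]
    linarith
  have e1 : (2 : ℤ) ^ (n + 2) = 4 * 2 ^ n := by rw [pow_add]; ring
  have e2 : (2 : ℤ) ^ (4 * n + 2) = 4 * ((2 ^ n) * 2 ^ n * (2 ^ n * 2 ^ n)) := by
    rw [pow_add, mul_comm 4 n, pow_mul]; ring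
  have e3 : (2 : ℤ) ^ (3 * n + 2) = 4 * ((2 ^ n) * 2 ^ n * 2 ^ n) := by
    rw [pow_add, mul_comm 3 n, pow_mul]; ring
  have hEXPR : (∑ b ∈ univ.filter (fun b : GaloisField 2 n => b ≠ 0),
        ∑ v₁ : GaloisField 2 n, ∑ v₂ : GaloisField 2 n,
          W n F (b * v₁) v₁ * W n F (b * v₂) v₂ * W n F (b * (v₁ + v₂)) (v₁ + v₂)
      + 2 ^ (n + 2) *
          ∑ v ∈ univ.filter (fun v : GaloisField 2 n => v ≠ 0), W n F 0 v ^ 2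
      - 2 ^ (4 * n + 2) + 2 ^ (3 * n + 2))
      = ((2 ^ n : ℤ) * 2 ^ n) *
          ((∑ b ∈ univ.filter (fun b : GaloisField 2 n => b ≠ 0),
              ∑ a : GaloisField 2 n,
                ((OPA.Nn n F b a : ℤ) ^ 3 - 3 * (OPA.Nn n F b a : ℤ) ^ 2
                  + 2 * (OPA.Nn n F b a : ℤ)))
            + ∑ a : GaloisField 2 n,
                ((OPA.Nn n F 0 a : ℤ) ^ 2 - (OPA.Nn n F 0 a : ℤ))) := by
    rw [hA, hB, hd1, hd2, e1, e2, e3]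
    linear_combination (3 * ((2:ℤ) ^ n * 2 ^ n)) * hY'
      - (2 * ((2:ℤ) ^ n * 2 ^ n)) * hZval + ((2:ℤ) ^ n * 2 ^ n) * hP1
  have hCUBnn : (0:ℤ) ≤ ∑ b ∈ univ.filter (fun b : GaloisField 2 n => b ≠ 0),
      ∑ a : GaloisField 2 n,
        ((OPA.Nn n F b a : ℤ) ^ 3 - 3 * (OPA.Nn n F b a : ℤ) ^ 2
          + 2 * (OPA.Nn n F b a : ℤ)) :=
    Finset.sum_nonneg fun b _ => Finset.sum_nonneg fun a _ => OPA.cub_nonneg _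
  have hQUADnn : (0:ℤ) ≤ ∑ a : GaloisField 2 n,
      ((OPA.Nn n F 0 a : ℤ) ^ 2 - (OPA.Nn n F 0 a : ℤ)) :=
    Finset.sum_nonneg fun a _ => OPA.quad_nonneg _
  constructor
  · rw [ge_iff_le, hEXPR]
    exact mul_nonneg (by positivity) (by linarith)
  · rw [hEXPR]
    have hQpos : (0:ℤ) < 2 ^ n * 2 ^ n := by positivity
    constructor
    · intro h0
      have hsum0 : (∑ b ∈ univ.filter (fun b : GaloisField 2 n => b ≠ 0),
            ∑ a : GaloisField 2 n,
              ((OPA.Nn n F b a : ℤ) ^ 3 - 3 * (OPA.Nn n F b a : ℤ) ^ 2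
                + 2 * (OPA.Nn n F b a : ℤ)))
          + (∑ a : GaloisField 2 n,
              ((OPA.Nn n F 0 a : ℤ) ^ 2 - (OPA.Nn n F 0 a : ℤ))) = 0 :=
        (mul_eq_zero.mp h0).resolve_left hQpos.ne'
      have hCUB0 : (∑ b ∈ univ.filter (fun b : GaloisField 2 n => b ≠ 0),
            ∑ a : GaloisField 2 n,
              ((OPA.Nn n F b a : ℤ) ^ 3 - 3 * (OPA.Nn n F b a : ℤ) ^ 2
                + 2 * (OPA.Nn n F b a : ℤ))) = 0 := by linarith
      have hQUAD0 : (∑ a : GaloisField 2 n,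
          ((OPA.Nn n F 0 a : ℤ) ^ 2 - (OPA.Nn n F 0 a : ℤ))) = 0 := by linarith
      have cond1 : ∀ b ∈ univ.filter (fun b : GaloisField 2 n => b ≠ 0),
          ∀ a : GaloisField 2 n, OPA.Nn n F b a ≤ 2 := by
        intro b hb a
        have h1 := (Finset.sum_eq_zero_iff_of_nonneg
          (fun b _ => Finset.sum_nonneg fun a _ => OPA.cub_nonneg
            (OPA.Nn n F b a))).mp hCUB0 b hb
        have h2 := (Finset.sum_eq_zero_iff_of_nonneg
          (fun a _ => OPA.cub_nonneg (OPA.Nn n F b a))).mp h1 a (Finset.mem_univ a)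
        exact (OPA.cub_eq_zero_iff _).mp h2
      have hGD0 : (∑ b ∈ univ.filter (fun b : GaloisField 2 n => b ≠ 0),
          ∑ a : GaloisField 2 n,
            (2 * (OPA.Nn n F b a : ℤ) - (OPA.Nn n F b a : ℤ) ^ 2)) = 0 := by
        rw [hGD]; exact hQUAD0
      intro b hb a
      have hb' : b ∈ univ.filter (fun b : GaloisField 2 n => b ≠ 0) :=
        Finset.mem_filter.mpr ⟨Finset.mem_univ b, hb⟩
      have h1 := (Finset.sum_eq_zero_iff_of_nonneg
        (fun b hb => Finset.sum_nonneg fun a _ =>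
          OPA.two_sub_nonneg (OPA.Nn n F b a) (cond1 b hb a))).mp hGD0 b hb'
      have h2 := (Finset.sum_eq_zero_iff_of_nonneg
        (fun a _ => OPA.two_sub_nonneg (OPA.Nn n F b a)
          (cond1 b hb' a))).mp h1 a (Finset.mem_univ a)
      have h3 := (OPA.two_sub_eq_zero_iff _).mp h2
      rw [OPA.natCard_eq]
      exact h3
    · intro hop
      have hvals : ∀ b ∈ univ.filter (fun b : GaloisField 2 n => b ≠ 0),
          ∀ a : GaloisField 2 n, OPA.Nn n F b a = 0 ∨ OPA.Nn n F b a = 2 := by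
        intro b hb a
        have := hop b (Finset.mem_filter.mp hb).2 a
        rwa [OPA.natCard_eq] at this
      have hGD0 : (∑ b ∈ univ.filter (fun b : GaloisField 2 n => b ≠ 0),
          ∑ a : GaloisField 2 n,
            (2 * (OPA.Nn n F b a : ℤ) - (OPA.Nn n F b a : ℤ) ^ 2)) = 0 :=
        Finset.sum_eq_zero fun b hb => Finset.sum_eq_zero fun a _ => by
          rcases hvals b hb a with h | h <;> rw [h] <;> norm_num
      have hQUAD0 : (∑ a : GaloisField 2 n,
          ((OPA.Nn n F 0 a : ℤ) ^ 2 - (OPA.Nn n F 0 a : ℤ))) = 0 := by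
        rw [← hGD]; exact hGD0
      have hCUB0 : (∑ b ∈ univ.filter (fun b : GaloisField 2 n => b ≠ 0),
            ∑ a : GaloisField 2 n,
              ((OPA.Nn n F b a : ℤ) ^ 3 - 3 * (OPA.Nn n F b a : ℤ) ^ 2
                + 2 * (OPA.Nn n F b a : ℤ))) = 0 :=
        Finset.sum_eq_zero fun b hb => Finset.sum_eq_zero fun a _ => by
          rcases hvals b hb a with h | h <;> rw [h] <;> norm_num
      rw [hCUB0, hQUAD0]
      ring
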